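/- One-step recursion for B-spline integrals: for every order k ≥ 1, every j ∈ ℤ and every x ∈ ℝ with x ≥ t_j, one has ∫_{t_j}^{x} B_{j,k}(u) du = ((t_{j+k} − t_j)/k) · B_{j,k+1}(x) + ((t_{j+k} − t_j)/(t_{j+k+1} − t_{j+1})) · ∫_{t_{j+1}}^{x} B_{j+1,k}(u) du. -/

import Mathlib

/-- B-splines of order `k ≥ 1` with knot sequence `t`, defined by the Cox–de Boor recursion:
`B_{j,1}(x) = 1` if `t j ≤ x < t (j+1)` and `0` otherwise; and for `k ≥ 2`,
`B_{j,k}(x) = ((x − t_j)/(t_{j+k−1} − t_j)) B_{j,k−1}(x)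
            + ((t_{j+k} − x)/(t_{j+k} − t_{j+1})) B_{j+1,k−1}(x)`.
(The value for order `0` is irrelevant and set to `0`.) -/
noncomputable def bspline (t : ℤ → ℝ) : ℕ → ℤ → ℝ → ℝ
  | 0, _, _ => 0
  | 1, j, x => if t j ≤ x ∧ x < t (j + 1) then 1 else 0
  | (k + 2), j, x =>
      ((x - t j) / (t (j + (k : ℤ) + 1) - t j)) * bspline t (k + 1) j x +
      ((t (j + (k : ℤ) + 2) - x) / (t (j + (k : ℤ) + 2) - t (j + 1))) *
        bspline t (k + 1) (j + 1) x

open Set MeasureTheory intervalIntegral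

lemma bspline_meas (t : ℤ → ℝ) : ∀ (k : ℕ) (j : ℤ), Measurable (bspline t k j)
  | 0, j => by simp only [bspline]; exact measurable_const
  | 1, j => by
      simp only [bspline]
      exact Measurable.ite (measurableSet_Ico (a := t j) (b := t (j+1))) measurable_const
        measurable_const
  | (k + 2), j => by
      simp only [bspline]
      exact (((measurable_id.sub_const _).div_const _).mul (bspline_meas t (k+1) j)).add
        (((measurable_const.sub measurable_id).div_const _).mul (bspline_meas t (k+1) (j+1)))

-- support lemma
lemma bspline_zero_of_lt {t : ℤ → ℝ} (ht : StrictMono t) :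
    ∀ (k : ℕ) (j : ℤ) (u : ℝ), u < t j → bspline t (k + 1) j u = 0
  | 0, j, u, hu => by simp only [bspline]; rw [if_neg]; rintro ⟨h, -⟩; exact absurd hu (not_lt.2 h)
  | (k + 1), j, u, hu => by
      simp only [bspline]
      rw [bspline_zero_of_lt ht k j u hu,
        bspline_zero_of_lt ht k (j+1) u (hu.trans (ht (by omega)))]
      ring

lemma bspline_two_eq {t : ℤ → ℝ} (ht : StrictMono t) (j : ℤ) (x : ℝ) :
    bspline t 2 j x =
      max 0 (min ((x - t j) / (t (j+1) - t j)) ((t (j+2) - x) / (t (j+2) - t (j+1)))) := by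
  have h01 : t j < t (j+1) := ht (by omega)
  have h12 : t (j+1) < t (j+2) := ht (by omega)
  have d1 : (0:ℝ) < t (j+1) - t j := by linarith
  have d2 : (0:ℝ) < t (j+2) - t (j+1) := by linarith
  show ((x - t j) / (t (j + (0:ℤ) + 1) - t j)) * bspline t 1 j x +
      ((t (j + (0:ℤ) + 2) - x) / (t (j + (0:ℤ) + 2) - t (j + 1))) * bspline t 1 (j+1) x = _
  norm_num only [add_zero, zero_add]
  simp only [bspline]
  rw [show j + 1 + 1 = j + 2 from by ring]
  rcases lt_or_ge x (t j) with h | h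
  · rw [if_neg (by rintro ⟨h1, -⟩; linarith), if_neg (by rintro ⟨h1, -⟩; linarith)]
    have hA : (x - t j) / (t (j+1) - t j) < 0 := div_neg_of_neg_of_pos (by linarith) d1
    rw [min_eq_left (by
      have hB : (0:ℝ) ≤ (t (j+2) - x) / (t (j+2) - t (j+1)) :=
        div_nonneg (by linarith) d2.le
      linarith), max_eq_left hA.le]
    ring
  rcases lt_or_ge x (t (j+1)) with h' | h'
  · rw [if_pos ⟨h, h'⟩, if_neg (by rintro ⟨h1, -⟩; linarith)]
    have hA : (0:ℝ) ≤ (x - t j) / (t (j+1) - t j) := div_nonneg (by linarith) d1.le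
    rw [min_eq_left (by
      rw [div_le_div_iff₀ d1 d2]; nlinarith), max_eq_right hA]
    ring
  rcases lt_or_ge x (t (j+2)) with h'' | h''
  · rw [if_neg (by rintro ⟨-, h2⟩; linarith), if_pos ⟨h', h''⟩]
    have hB : (0:ℝ) ≤ (t (j+2) - x) / (t (j+2) - t (j+1)) := div_nonneg (by linarith) d2.le
    rw [min_eq_right (by rw [div_le_div_iff₀ d2 d1]; nlinarith), max_eq_right hB]
    ring
  · rw [if_neg (by rintro ⟨-, h2⟩; linarith), if_neg (by rintro ⟨-, h2⟩; linarith)]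
    have hB : (t (j+2) - x) / (t (j+2) - t (j+1)) ≤ 0 :=
      div_nonpos_of_nonpos_of_nonneg (by linarith) d2.le
    rw [min_eq_right (by
      have hA : (0:ℝ) ≤ (x - t j) / (t (j+1) - t j) := div_nonneg (by linarith) d1.le
      linarith), max_eq_left hB]
    ring

lemma bspline_continuous {t : ℤ → ℝ} (ht : StrictMono t) :
    ∀ (k : ℕ) (j : ℤ), Continuous (bspline t (k + 2) j)
  | 0, j => by
      have : bspline t 2 j = fun x =>
          max 0 (min ((x - t j) / (t (j+1) - t j)) ((t (j+2) - x) / (t (j+2) - t (j+1)))) :=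
        funext fun x => bspline_two_eq ht j x
      rw [this]
      exact continuous_const.max
        (((continuous_id.sub continuous_const).div_const _).min
          ((continuous_const.sub continuous_id).div_const _))
  | (k + 1), j => by
      show Continuous (bspline t (k + 3) j)
      simp only [bspline]
      exact (((continuous_id.sub continuous_const).div_const _).mul
          (bspline_continuous ht k j)).add
        (((continuous_const.sub continuous_id).div_const _).mul
          (bspline_continuous ht k (j+1)))

open Filter Topology

lemma bspline_one_locally_const {t : ℤ → ℝ} (j : ℤ) {u : ℝ} (hu : ∀ i, u ≠ t i) :
    ∀ᶠ v in 𝓝 u, bspline t 1 j v = bspline t 1 j u := by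
  have h1 := (hu j).lt_or_gt
  have h2 := (hu (j+1)).lt_or_gt
  rcases h1 with h | h
  · -- u < t j : locally both sides 0
    filter_upwards [eventually_lt_nhds h] with v hv
    simp only [bspline]
    rw [if_neg (by rintro ⟨h', -⟩; linarith), if_neg (by rintro ⟨h', -⟩; linarith)]
  rcases h2 with h' | h'
  · -- t j < u < t (j+1) : locally 1
    filter_upwards [(isOpen_Ioo (a := t j) (b := t (j+1))).eventually_mem ⟨h, h'⟩] with v hv
    simp only [bspline]
    rw [if_pos ⟨hv.1.le, hv.2⟩, if_pos ⟨h.le, h'⟩]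
  · -- u > t (j+1) : locally 0
    filter_upwards [eventually_gt_nhds h'] with v hv
    · simp only [bspline]
      rw [if_neg (by rintro ⟨-, h''⟩; linarith), if_neg (by rintro ⟨-, h''⟩; linarith)]

lemma bspline_continuousAt {t : ℤ → ℝ} (ht : StrictMono t) (k : ℕ) (j : ℤ) {u : ℝ}
    (hu : ∀ i, u ≠ t i) : ContinuousAt (bspline t (k + 1) j) u := by
  cases k with
  | zero =>
      have h := bspline_one_locally_const (t := t) j hu
      exact continuousAt_const.congr (h.mono fun v hv => hv.symm)
  | succ k => exact (bspline_continuous ht k j).continuousAt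

lemma bspline_alg (p q r a b c u K x1 x2 x3 : ℝ) (h1 : a - p ≠ 0) (h2 : b - q ≠ 0)
    (h3 : c - r ≠ 0) (h4 : b - p ≠ 0) (h5 : c - q ≠ 0) :
    (K + 2) * (((u - p) / (a - p) * x1 + (b - u) / (b - q) * x2) / (b - p)
      - ((u - q) / (b - q) * x2 + (c - u) / (c - r) * x3) / (c - q)) =
    1 / (b - p) * ((u - p) / (a - p) * x1 + (b - u) / (b - q) * x2)
      + (u - p) / (b - p) * ((K + 1) * (x1 / (a - p) - x2 / (b - q)))
      + ((0 - 1) / (c - q) * ((u - q) / (b - q) * x2 + (c - u) / (c - r) * x3)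
      + (c - u) / (c - q) * ((K + 1) * (x2 / (b - q) - x3 / (c - r)))) := by
  have e1 : (K + 2) * ((u - p) / (a - p) * x1) / (b - p) =
      1 / (b - p) * ((u - p) / (a - p) * x1) + (u - p) / (b - p) * ((K + 1) * (x1 / (a - p))) := by
    field_simp; ring
  have e3 : (K + 2) * ((c - u) / (c - r) * x3) / (c - q) =
      1 / (c - q) * ((c - u) / (c - r) * x3) + (c - u) / (c - q) * ((K + 1) * (x3 / (c - r))) := by
    field_simp; ring
  have e2 : (K + 2) * ((b - u) / (b - q) * x2 / (b - p) - (u - q) / (b - q) * x2 / (c - q)) =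
      1 / (b - p) * ((b - u) / (b - q) * x2) - (u - p) / (b - p) * ((K + 1) * (x2 / (b - q)))
      - 1 / (c - q) * ((u - q) / (b - q) * x2) + (c - u) / (c - q) * ((K + 1) * (x2 / (b - q))) := by
    field_simp; ring
  linear_combination e1 + e2 - e3

set_option maxRecDepth 10000 in
set_option maxHeartbeats 1000000 in
lemma bspline_hasDerivAt {t : ℤ → ℝ} (ht : StrictMono t) :
    ∀ (k : ℕ) (j : ℤ) (u : ℝ), (∀ i, u ≠ t i) →
    HasDerivAt (bspline t (k + 2) j)
      (((k : ℝ) + 1) * (bspline t (k + 1) j u / (t (j + (k : ℤ) + 1) - t j)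
        - bspline t (k + 1) (j + 1) u / (t (j + (k : ℤ) + 2) - t (j + 1)))) u
  | 0, j, u, hu => by
      have h1 := bspline_one_locally_const (t := t) j hu
      have h2 := bspline_one_locally_const (t := t) (j + 1) hu
      have hA : HasDerivAt
          (fun v => ((v - t j) / (t (j + (0:ℤ) + 1) - t j)) * bspline t 1 j u)
          ((1 / (t (j + (0:ℤ) + 1) - t j)) * bspline t 1 j u) u :=
        (((hasDerivAt_id u).sub_const (t j)).div_const _).mul_const _
      have hB : HasDerivAt
          (fun v => ((t (j + (0:ℤ) + 2) - v) / (t (j + (0:ℤ) + 2) - t (j + 1))) *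
            bspline t 1 (j + 1) u)
          (((0 - 1) / (t (j + (0:ℤ) + 2) - t (j + 1))) * bspline t 1 (j + 1) u) u :=
        (((hasDerivAt_const u _).sub (hasDerivAt_id u)).div_const _).mul_const _
      have key : HasDerivAt (bspline t 2 j)
          ((1 / (t (j + (0:ℤ) + 1) - t j)) * bspline t 1 j u +
            ((0 - 1) / (t (j + (0:ℤ) + 2) - t (j + 1))) * bspline t 1 (j + 1) u) u := by
        refine (hA.add hB).congr_of_eventuallyEq ?_
        filter_upwards [h1, h2] with v e1 e2
        rw [← e1, ← e2]
        simp only [bspline]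
        norm_num
      convert key using 1
      push_cast
      norm_num
      ring
  | (k + 1), j, u, hu => by
      have IH1 := bspline_hasDerivAt ht k j u hu
      have IH2 := bspline_hasDerivAt ht k (j + 1) u hu
      rw [show j + 1 + (k : ℤ) + 1 = j + (k : ℤ) + 2 from by ring,
        show j + 1 + (k : ℤ) + 2 = j + (k : ℤ) + 3 from by ring,
        show j + 1 + 1 = j + 2 from by ring] at IH2
      have hA : t (j + (k : ℤ) + 1) - t j ≠ 0 := sub_ne_zero.2 (ne_of_gt (ht (by omega)))
      have hB : t (j + (k : ℤ) + 2) - t (j + 1) ≠ 0 := sub_ne_zero.2 (ne_of_gt (ht (by omega)))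
      have hC : t (j + (k : ℤ) + 3) - t (j + 2) ≠ 0 := sub_ne_zero.2 (ne_of_gt (ht (by omega)))
      have hD1 : t (j + (k : ℤ) + 2) - t j ≠ 0 := sub_ne_zero.2 (ne_of_gt (ht (by omega)))
      have hD2 : t (j + (k : ℤ) + 3) - t (j + 1) ≠ 0 := sub_ne_zero.2 (ne_of_gt (ht (by omega)))
      have P1 := (((hasDerivAt_id u).sub_const (t j)).div_const
        (t (j + (k : ℤ) + 2) - t j)).mul IH1
      have P2 := (((hasDerivAt_const u (t (j + (k : ℤ) + 3))).sub (hasDerivAt_id u)).div_const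
        (t (j + (k : ℤ) + 3) - t (j + 1))).mul IH2
      have key := P1.add P2
      have efun : bspline t (k + 1 + 2) j = fun v =>
          ((v - t j) / (t (j + (k : ℤ) + 2) - t j)) * bspline t (k + 2) j v +
          ((t (j + (k : ℤ) + 3) - v) / (t (j + (k : ℤ) + 3) - t (j + 1))) *
            bspline t (k + 2) (j + 1) v := by
        funext v
        show ((v - t j) / (t (j + ((k:ℕ)+1 : ℤ) + 1) - t j)) * bspline t (k + 2) j v +
          ((t (j + ((k:ℕ)+1 : ℤ) + 2) - v) / (t (j + ((k:ℕ)+1 : ℤ) + 2) - t (j + 1))) *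
            bspline t (k + 2) (j + 1) v = _
        rw [show j + ((k:ℕ)+1 : ℤ) + 1 = j + (k : ℤ) + 2 from by push_cast; ring,
          show j + ((k:ℕ)+1 : ℤ) + 2 = j + (k : ℤ) + 3 from by push_cast; ring]
      rw [efun]
      convert key using 1
      · rfl
      · rfl
      · rfl
      simp only [id_eq, Pi.sub_apply]
      push_cast
      rw [show j + ((k:ℤ) + 1) + 1 = j + (k : ℤ) + 2 from by ring,
        show j + ((k:ℤ) + 1) + 2 = j + (k : ℤ) + 3 from by ring]
      simp only [bspline]
      rw [show j + 1 + (k : ℤ) + 1 = j + (k : ℤ) + 2 from by ring,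
        show j + 1 + (k : ℤ) + 2 = j + (k : ℤ) + 3 from by ring,
        show j + 1 + 1 = j + 2 from by ring]
      linear_combination bspline_alg (t j) (t (j+1)) (t (j+2)) (t (j+(k:ℤ)+1))
        (t (j+(k:ℤ)+2)) (t (j+(k:ℤ)+3)) u (k:ℝ) (bspline t (k+1) j u)
        (bspline t (k+1) (j+1) u) (bspline t (k+1) (j+2) u) hA hB hC hD1 hD2

lemma bspline_one_eq_indicator (t : ℤ → ℝ) (j : ℤ) :
    bspline t 1 j = (Set.Ico (t j) (t (j + 1))).indicator (fun _ => (1:ℝ)) := by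
  funext x
  simp only [bspline, Set.indicator_apply, Set.mem_Ico]

lemma bspline_intervalIntegrable {t : ℤ → ℝ} (ht : StrictMono t) (k : ℕ) (j : ℤ) (a b : ℝ) :
    IntervalIntegrable (bspline t (k + 1) j) volume a b := by
  cases k with
  | zero =>
      rw [bspline_one_eq_indicator]
      refine MeasureTheory.Integrable.intervalIntegrable ?_
      rw [MeasureTheory.integrable_indicator_iff measurableSet_Ico]
      exact MeasureTheory.integrableOn_const measure_Ico_lt_top.ne
  | succ k => exact (bspline_continuous ht k j).intervalIntegrable a b

/-- One-step recursion for B-spline integrals: for every order `k ≥ 1` and `x ≥ t j`,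
`∫_{t_j}^{x} B_{j,k}(u) du = ((t_{j+k} − t_j)/k) B_{j,k+1}(x)
 + ((t_{j+k} − t_j)/(t_{j+k+1} − t_{j+1})) ∫_{t_{j+1}}^{x} B_{j+1,k}(u) du`. -/
theorem bspline_integral_recursion (t : ℤ → ℝ) (ht : StrictMono t) (k : ℕ) (hk : 1 ≤ k)
    (j : ℤ) (x : ℝ) (hx : t j ≤ x) :
    ∫ u in (t j)..x, bspline t k j u =
      ((t (j + (k : ℤ)) - t j) / (k : ℝ)) * bspline t (k + 1) j x +
      ((t (j + (k : ℤ)) - t j) / (t (j + (k : ℤ) + 1) - t (j + 1))) *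
        ∫ u in (t (j + 1))..x, bspline t k (j + 1) u := by
  obtain ⟨m, rfl⟩ : ∃ m, k = m + 1 := ⟨k - 1, by omega⟩
  set c : ℝ := (t (j + ((m + 1 : ℕ) : ℤ)) - t j) / ((m + 1 : ℕ) : ℝ) with hc
  set d : ℝ := (t (j + ((m + 1 : ℕ) : ℤ)) - t j) / (t (j + ((m + 1 : ℕ) : ℤ) + 1) - t (j + 1))
    with hd
  set g : ℝ → ℝ := fun y => c * bspline t (m + 2) j y +
    d * ∫ u in (t (j + 1))..y, bspline t (m + 1) (j + 1) u with hgdef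
  have hE1 : j + ((m + 1 : ℕ) : ℤ) = j + (m : ℤ) + 1 := by push_cast; ring
  have hE2 : j + ((m + 1 : ℕ) : ℤ) + 1 = j + (m : ℤ) + 2 := by push_cast; ring
  have hA : t (j + (m : ℤ) + 1) - t j ≠ 0 := sub_ne_zero.2 (ne_of_gt (ht (by omega)))
  have hB : t (j + (m : ℤ) + 2) - t (j + 1) ≠ 0 := sub_ne_zero.2 (ne_of_gt (ht (by omega)))
  have hg0 : g (t j) = 0 := by
    have h1 : bspline t (m + 2) j (t j) = 0 := by
      simp only [bspline]
      rw [bspline_zero_of_lt ht m (j + 1) (t j) (ht (by omega))]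
      simp
    have h2 : (∫ u in (t (j + 1))..(t j), bspline t (m + 1) (j + 1) u) = 0 := by
      rw [intervalIntegral.integral_symm, intervalIntegral.integral_of_le (ht (by omega)).le,
        MeasureTheory.integral_Ioc_eq_integral_Ioo,
        MeasureTheory.setIntegral_eq_zero_of_forall_eq_zero
          (fun u hu => bspline_zero_of_lt ht m (j + 1) u hu.2)]
      simp
    rw [hgdef]
    simp [h1, h2]
  have key : (∫ u in (t j)..x, bspline t (m + 1) j u) = g x - g (t j) := by
    refine MeasureTheory.integral_eq_of_hasDerivAt_off_countable_of_le g
      (fun u => bspline t (m + 1) j u) hx (Set.countable_range t) ?_ ?_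
      (bspline_intervalIntegrable ht m j _ _)
    · refine Continuous.continuousOn ?_
      exact (continuous_const.mul (bspline_continuous ht m j)).add (continuous_const.mul
        (intervalIntegral.continuous_primitive
          (fun a b => bspline_intervalIntegrable ht m (j + 1) a b) (t (j + 1))))
    · intro u hu
      have hu' : ∀ i, u ≠ t i := by
        intro i hi
        exact hu.2 ⟨i, hi.symm⟩
      have d1 := (bspline_hasDerivAt ht m j u hu').const_mul c
      have d2 := (intervalIntegral.integral_hasDerivAt_right
        (bspline_intervalIntegrable ht m (j + 1) (t (j + 1)) u)
        ((bspline_meas t (m + 1) (j + 1)).aestronglyMeasurable.stronglyMeasurableAtFilter)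
        (bspline_continuousAt ht m (j + 1) hu')).const_mul d
      have comb := d1.add d2
      convert comb using 1
      · rfl
      rw [hc, hd, hE1, show j + (m:ℤ) + 1 + 1 = j + (m:ℤ) + 2 from by ring]
      push_cast
      have hm : ((m : ℝ) + 1) ≠ 0 := by positivity
      field_simp
      ring
  rw [key, hg0, sub_zero]
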